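/- If there exist an almost 2-perfect 8-cycle system of order r+1 and an almost 2-perfect 8-cycle decomposition of K_{r,s}, then there exists an almost 2-perfect 8-cycle decomposition of K_{r+s+1} \ K_{s+1} (the complete graph on r+s+1 vertices with the edges of a complete subgraph on s+1 specified vertices removed). -/
import Mathlib


open Finset

/-- The edge set of the closed walk visiting `f 0, f 1, ..., f (m-1)` and back to `f 0`. -/
def cycleEdges {V : Type*} [DecidableEq V] (m : ℕ) (f : ℕ → V) : Finset (Sym2 V) :=
  (Finset.range m).image (fun i => s(f i, f ((i + 1) % m)))

/-- `f` describes an `m`-cycle: its first `m` values are pairwise distinct. -/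
def IsCycleMap {V : Type*} (m : ℕ) (f : ℕ → V) : Prop :=
  Set.InjOn f ↑(Finset.range m)

/-- Vertex set of the cycle described by `f`. -/
def cycleVerts {V : Type*} [DecidableEq V] (m : ℕ) (f : ℕ → V) : Finset V :=
  (Finset.range m).image f

/-- `g` is an inside `m`-cycle of `f`: same vertex set and edge-disjoint. -/
def IsInsideOf {V : Type*} [DecidableEq V] (m : ℕ) (g f : ℕ → V) : Prop :=
  IsCycleMap m g ∧ cycleVerts m g = cycleVerts m f ∧
    Disjoint (cycleEdges m f) (cycleEdges m g)

/-- Edge set of the complete graph on `V`. -/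
def kEdges (V : Type*) [Fintype V] [DecidableEq V] : Finset (Sym2 V) :=
  Finset.univ.filter (fun e => ¬ e.IsDiag)

/-- Edge set of the complete bipartite graph `K_{r,s}`. -/
def bipEdges (r s : ℕ) : Finset (Sym2 (Fin r ⊕ Fin s)) :=
  (Finset.univ : Finset (Fin r × Fin s)).image (fun p => s(Sum.inl p.1, Sum.inr p.2))

/-- `E` admits an almost 2-perfect 8-cycle decomposition. -/
def HasA2PDecomp {V : Type*} [DecidableEq V] (E : Finset (Sym2 V)) : Prop :=
  ∃ (k : ℕ) (c c' : Fin k → ℕ → V),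
    (∀ i, IsCycleMap 8 (c i)) ∧
    (∀ i j, i ≠ j → Disjoint (cycleEdges 8 (c i)) (cycleEdges 8 (c j))) ∧
    Finset.univ.sup (fun i => cycleEdges 8 (c i)) = E ∧
    (∀ i, IsInsideOf 8 (c' i) (c i)) ∧
    (∀ i j, i ≠ j → Disjoint (cycleEdges 8 (c' i)) (cycleEdges 8 (c' j))) ∧
    Finset.univ.sup (fun i => cycleEdges 8 (c' i)) = E

/-- `E` admits an almost 2-perfect 8-cycle packing with leave `L`. -/
def HasA2PPacking {V : Type*} [DecidableEq V] (E L : Finset (Sym2 V)) : Prop :=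
  L ⊆ E ∧ ∃ (k : ℕ) (c c' : Fin k → ℕ → V),
    (∀ i, IsCycleMap 8 (c i)) ∧
    (∀ i j, i ≠ j → Disjoint (cycleEdges 8 (c i)) (cycleEdges 8 (c j))) ∧
    Finset.univ.sup (fun i => cycleEdges 8 (c i)) = E \ L ∧
    (∀ i, IsInsideOf 8 (c' i) (c i)) ∧
    (∀ i j, i ≠ j → Disjoint (cycleEdges 8 (c' i)) (cycleEdges 8 (c' j))) ∧
    Finset.univ.sup (fun i => cycleEdges 8 (c' i)) = E \ L

/-- A 1-factor (perfect matching) as a set of edges. -/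
def IsOneFactor {V : Type*} (L : Finset (Sym2 V)) : Prop :=
  (∀ e ∈ L, ¬ e.IsDiag) ∧ ∀ v : V, ∃! e, e ∈ L ∧ v ∈ e


section Aux

open Function

lemma cycleEdges_comp {V W : Type*} [DecidableEq V] [DecidableEq W]
    (e : V → W) (m : ℕ) (f : ℕ → V) :
    cycleEdges m (e ∘ f) = (cycleEdges m f).image (Sym2.map e) := by
  simp [cycleEdges, Finset.image_image, Function.comp_def, Sym2.map_pair_eq]

lemma isCycleMap_comp {V W : Type*} (e : V → W) (he : Injective e) {m : ℕ} {f : ℕ → V}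
    (hf : IsCycleMap m f) : IsCycleMap m (e ∘ f) :=
  (he.injOn).comp hf (Set.mapsTo_univ _ _)

lemma cycleVerts_comp {V W : Type*} [DecidableEq V] [DecidableEq W]
    (e : V → W) (m : ℕ) (f : ℕ → V) :
    cycleVerts m (e ∘ f) = (cycleVerts m f).image e := by
  simp [cycleVerts, Finset.image_image]

lemma isInsideOf_comp {V W : Type*} [DecidableEq V] [DecidableEq W]
    (e : V → W) (he : Injective e) {g f : ℕ → V}
    (h : IsInsideOf 8 g f) : IsInsideOf 8 (e ∘ g) (e ∘ f) := by
  obtain ⟨h1, h2, h3⟩ := h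
  refine ⟨isCycleMap_comp e he h1, by rw [cycleVerts_comp, cycleVerts_comp, h2], ?_⟩
  rw [cycleEdges_comp, cycleEdges_comp]
  exact (Finset.disjoint_image (Sym2.map.injective he)).2 h3

lemma image_finset_sup {ι β γ : Type*} [DecidableEq β] [DecidableEq γ]
    (s : Finset ι) (g : ι → Finset β) (f : β → γ) :
    s.sup (fun i => (g i).image f) = (s.sup g).image f := by
  ext x
  simp only [Finset.mem_sup, Finset.mem_image]
  constructor
  · rintro ⟨i, hi, a, ha, rfl⟩; exact ⟨a, ⟨i, hi, ha⟩, rfl⟩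
  · rintro ⟨a, ⟨i, hi, ha⟩, rfl⟩; exact ⟨i, hi, a, ha, rfl⟩

lemma HasA2PDecomp.map {V W : Type*} [DecidableEq V] [DecidableEq W] {E : Finset (Sym2 V)}
    (h : HasA2PDecomp E) (e : V → W) (he : Injective e) :
    HasA2PDecomp (E.image (Sym2.map e)) := by
  obtain ⟨k, c, c', a1, a2, a3, a4, a5, a6⟩ := h
  refine ⟨k, fun i => e ∘ c i, fun i => e ∘ c' i,
    fun i => isCycleMap_comp e he (a1 i),
    fun i j hij => ?_, ?_, fun i => isInsideOf_comp e he (a4 i),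
    fun i j hij => ?_, ?_⟩
  · rw [cycleEdges_comp, cycleEdges_comp]
    exact (Finset.disjoint_image (Sym2.map.injective he)).2 (a2 i j hij)
  · simp only [cycleEdges_comp]
    rw [image_finset_sup, a3]
  · rw [cycleEdges_comp, cycleEdges_comp]
    exact (Finset.disjoint_image (Sym2.map.injective he)).2 (a5 i j hij)
  · simp only [cycleEdges_comp]
    rw [image_finset_sup, a6]

lemma sup_addCases {V : Type*} [DecidableEq V] {k1 k2 : ℕ}
    (c1 : Fin k1 → ℕ → V) (c2 : Fin k2 → ℕ → V) :
    Finset.univ.sup (fun i => cycleEdges 8 (Fin.addCases (motive := fun _ => ℕ → V) c1 c2 i))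
      = Finset.univ.sup (fun i => cycleEdges 8 (c1 i))
        ∪ Finset.univ.sup (fun i => cycleEdges 8 (c2 i)) := by
  ext x
  simp only [Finset.mem_sup, Finset.mem_union, Finset.mem_univ, true_and]
  constructor
  · rintro ⟨i, hi⟩
    refine Fin.addCases
      (motive := fun i => x ∈ cycleEdges 8 (Fin.addCases (motive := fun _ => ℕ → V) c1 c2 i) →
        (∃ j, x ∈ cycleEdges 8 (c1 j)) ∨ ∃ j, x ∈ cycleEdges 8 (c2 j))
      (fun j hj => ?_) (fun j hj => ?_) i hi
    · exact Or.inl ⟨j, by simpa using hj⟩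
    · exact Or.inr ⟨j, by simpa using hj⟩
  · rintro (⟨j, hj⟩ | ⟨j, hj⟩)
    · exact ⟨Fin.castAdd _ j, by simpa using hj⟩
    · exact ⟨Fin.natAdd _ j, by simpa using hj⟩

lemma HasA2PDecomp.union {V : Type*} [DecidableEq V] {E1 E2 : Finset (Sym2 V)}
    (h1 : HasA2PDecomp E1) (h2 : HasA2PDecomp E2) (hd : Disjoint E1 E2) :
    HasA2PDecomp (E1 ∪ E2) := by
  obtain ⟨k1, c1, c1', a1, a2, a3, a4, a5, a6⟩ := h1
  obtain ⟨k2, c2, c2', b1, b2, b3, b4, b5, b6⟩ := h2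
  have s1 : ∀ i, cycleEdges 8 (c1 i) ≤ E1 := fun i => by
    rw [← a3]; exact Finset.le_sup (f := fun i => cycleEdges 8 (c1 i)) (Finset.mem_univ i)
  have s1' : ∀ i, cycleEdges 8 (c1' i) ≤ E1 := fun i => by
    rw [← a6]; exact Finset.le_sup (f := fun i => cycleEdges 8 (c1' i)) (Finset.mem_univ i)
  have s2 : ∀ i, cycleEdges 8 (c2 i) ≤ E2 := fun i => by
    rw [← b3]; exact Finset.le_sup (f := fun i => cycleEdges 8 (c2 i)) (Finset.mem_univ i)
  have s2' : ∀ i, cycleEdges 8 (c2' i) ≤ E2 := fun i => by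
    rw [← b6]; exact Finset.le_sup (f := fun i => cycleEdges 8 (c2' i)) (Finset.mem_univ i)
  refine ⟨k1 + k2, Fin.addCases (motive := fun _ => ℕ → V) c1 c2,
    Fin.addCases (motive := fun _ => ℕ → V) c1' c2', ?_, ?_, ?_, ?_, ?_, ?_⟩
  · intro i
    refine Fin.addCases (fun j => ?_) (fun j => ?_) i
    · simpa using a1 j
    · simpa using b1 j
  · intro i
    refine Fin.addCases (motive := fun i => ∀ j, i ≠ j →
        Disjoint (cycleEdges 8 (Fin.addCases (motive := fun _ => ℕ → V) c1 c2 i))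
          (cycleEdges 8 (Fin.addCases (motive := fun _ => ℕ → V) c1 c2 j)))
      (fun i => ?_) (fun i => ?_) i <;>
    · intro j
      refine Fin.addCases (fun j' hij => ?_) (fun j' hij => ?_) j <;> simp only [Fin.addCases_left, Fin.addCases_right]
      · first
        | exact a2 i j' (fun h => hij (by rw [h]))
        | exact (hd.symm.mono (s2 i) (s1 j'))
      · first
        | exact hd.mono (s1 i) (s2 j')
        | exact b2 i j' (fun h => hij (by rw [h]))
  · rw [sup_addCases, a3, b3]
  · intro i
    refine Fin.addCases (fun j => ?_) (fun j => ?_) i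
    · simpa using a4 j
    · simpa using b4 j
  · intro i
    refine Fin.addCases (motive := fun i => ∀ j, i ≠ j →
        Disjoint (cycleEdges 8 (Fin.addCases (motive := fun _ => ℕ → V) c1' c2' i))
          (cycleEdges 8 (Fin.addCases (motive := fun _ => ℕ → V) c1' c2' j)))
      (fun i => ?_) (fun i => ?_) i <;>
    · intro j
      refine Fin.addCases (fun j' hij => ?_) (fun j' hij => ?_) j <;> simp only [Fin.addCases_left, Fin.addCases_right]
      · first
        | exact a5 i j' (fun h => hij (by rw [h]))
        | exact (hd.symm.mono (s2' i) (s1' j'))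
      · first
        | exact hd.mono (s1' i) (s2' j')
        | exact b5 i j' (fun h => hij (by rw [h]))
  · rw [sup_addCases, a6, b6]

def emb1 (r s : ℕ) : Fin (r + 1) → Fin (r + s + 1) :=
  fun i => ⟨i.val, by omega⟩

def emb2 (r s : ℕ) : Fin r ⊕ Fin s → Fin (r + s + 1) :=
  Sum.elim (fun i => ⟨i.val, by omega⟩) (fun j => ⟨r + 1 + j.val, by omega⟩)

lemma emb1_inj (r s : ℕ) : Function.Injective (emb1 r s) := by
  intro a b h
  simp only [emb1, Fin.mk.injEq] at h
  exact Fin.ext h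

lemma emb2_inj (r s : ℕ) : Function.Injective (emb2 r s) := by
  rintro (a | a) (b | b) h <;> simp only [emb2, Sum.elim_inl, Sum.elim_inr, Fin.mk.injEq] at h
  · exact congrArg Sum.inl (Fin.ext h)
  · exact absurd h (by omega)
  · exact absurd h (by omega)
  · exact congrArg Sum.inr (Fin.ext (by omega))

lemma mem_imgK {r s : ℕ} (a b : Fin (r + s + 1)) :
    s(a, b) ∈ (kEdges (Fin (r + 1))).image (Sym2.map (emb1 r s)) ↔
      a ≠ b ∧ a.val < r + 1 ∧ b.val < r + 1 := by
  constructor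
  · intro h
    rw [Finset.mem_image] at h
    obtain ⟨y, hy, hmap⟩ := h
    induction y using Sym2.ind with
    | _ u v =>
      simp only [kEdges, Finset.mem_filter, Finset.mem_univ, true_and, Sym2.mk_isDiag_iff] at hy
      rw [Sym2.map_pair_eq, Sym2.eq_iff] at hmap
      rcases hmap with ⟨h1, h2⟩ | ⟨h1, h2⟩ <;> subst h1 <;> subst h2
      · exact ⟨fun he => hy (emb1_inj r s he), u.isLt, v.isLt⟩
      · exact ⟨fun he => hy (emb1_inj r s he.symm), v.isLt, u.isLt⟩
  · rintro ⟨hab, ha, hb⟩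
    refine Finset.mem_image.2 ⟨s(⟨a.val, ha⟩, ⟨b.val, hb⟩), ?_, ?_⟩
    · simp only [kEdges, Finset.mem_filter, Finset.mem_univ, true_and, Sym2.mk_isDiag_iff]
      intro he
      rw [Fin.mk.injEq] at he
      exact hab (Fin.ext he)
    · rw [Sym2.map_pair_eq]
      congr 1

lemma mem_imgB {r s : ℕ} (a b : Fin (r + s + 1)) :
    s(a, b) ∈ (bipEdges r s).image (Sym2.map (emb2 r s)) ↔
      (a.val < r ∧ r + 1 ≤ b.val) ∨ (b.val < r ∧ r + 1 ≤ a.val) := by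
  rw [bipEdges, Finset.image_image]
  simp only [Finset.mem_image, Finset.mem_univ, true_and, Function.comp_def,
    Sym2.map_pair_eq, emb2, Sum.elim_inl, Sum.elim_inr]
  constructor
  · rintro ⟨p, hp⟩
    rw [Sym2.eq_iff] at hp
    rcases hp with ⟨h1, h2⟩ | ⟨h1, h2⟩ <;> subst h1 <;> subst h2
    · exact Or.inl ⟨p.1.isLt, by simp⟩
    · exact Or.inr ⟨p.1.isLt, by simp⟩
  · rintro (⟨ha, hb⟩ | ⟨hb, ha⟩)
    · refine ⟨(⟨a.val, ha⟩, ⟨b.val - (r + 1), by omega⟩), ?_⟩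
      rw [Sym2.eq_iff]
      exact Or.inl ⟨Fin.ext rfl, Fin.ext (by simp; omega)⟩
    · refine ⟨(⟨b.val, hb⟩, ⟨a.val - (r + 1), by omega⟩), ?_⟩
      rw [Sym2.eq_iff]
      exact Or.inr ⟨Fin.ext rfl, Fin.ext (by simp; omega)⟩

end Aux

/-- From an A2P 8-cycle system of order `r+1` and an A2P decomposition of `K_{r,s}`,
one gets an A2P 8-cycle decomposition of `K_{r+s+1}` minus a hole `K_{s+1}`. -/
theorem a2p_hole (r s : ℕ)
    (h1 : HasA2PDecomp (kEdges (Fin (r + 1))))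
    (h2 : HasA2PDecomp (bipEdges r s)) :
    HasA2PDecomp ((kEdges (Fin (r + s + 1))) \
      ((Finset.univ.filter (fun v : Fin (r + s + 1) => r ≤ v.val)).sym2) ) := by
  have key : (kEdges (Fin (r + s + 1))) \
      ((Finset.univ.filter (fun v : Fin (r + s + 1) => r ≤ v.val)).sym2)
      = (kEdges (Fin (r + 1))).image (Sym2.map (emb1 r s))
        ∪ (bipEdges r s).image (Sym2.map (emb2 r s)) := by
    ext x
    induction x using Sym2.ind with
    | _ a b =>
      rw [Finset.mem_sdiff, Finset.mem_union, mem_imgK, mem_imgB]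
      simp only [kEdges, Finset.mem_filter, Finset.mem_univ, true_and, Sym2.mk_isDiag_iff,
        Finset.mk_mem_sym2_iff, not_and]
      have hne : a ≠ b ↔ a.val ≠ b.val := by
        constructor
        · intro h h'; exact h (Fin.ext h')
        · intro h h'; exact h (congrArg Fin.val h')
      rw [hne]
      have ha := a.isLt
      have hb := b.isLt
      omega
  rw [key]
  have hd : Disjoint ((kEdges (Fin (r + 1))).image (Sym2.map (emb1 r s)))
      ((bipEdges r s).image (Sym2.map (emb2 r s))) := by
    rw [Finset.disjoint_left]
    intro x hx hx'
    induction x using Sym2.ind with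
    | _ a b =>
      rw [mem_imgK] at hx
      rw [mem_imgB] at hx'
      omega
  exact (h1.map (emb1 r s) (emb1_inj r s)).union (h2.map (emb2 r s) (emb2_inj r s)) hd
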